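/- For a finite group G, the number α_{G,n} of simultaneous conjugacy classes of n-tuples satisfies α_{G,n} ~ |Z(G)| · |G|^{n−1} as n → ∞, i.e., lim_{n→∞} α_{G,n} / (|Z(G)| |G|^{n−1}) = 1. -/
import Mathlib


/-- Number of orbits of `G` acting on `G^n` by simultaneous conjugation. -/
noncomputable def alphaOrbits (G : Type*) [Group G] (n : ℕ) : ℕ :=
  Nat.card (Quotient (MulAction.orbitRel (ConjAct G) (Fin n → G)))

/-- Pairwise commuting `n`-tuples as a sub-`MulAction` of the conjugation action. -/
def commTuples (G : Type*) [Group G] (n : ℕ) : SubMulAction (ConjAct G) (Fin n → G) where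
  carrier := {x | ∀ i j, Commute (x i) (x j)}
  smul_mem' := by
    intro g x hx i j
    have h := (hx i j).map (MulAut.conj (ConjAct.ofConjAct g)).toMonoidHom
    simpa [ConjAct.smul_def, MulAut.conj_apply, mul_assoc] using h

/-- Number of orbits of `G` acting on pairwise-commuting `n`-tuples by
simultaneous conjugation. -/
noncomputable def betaOrbits (G : Type*) [Group G] (n : ℕ) : ℕ :=
  Nat.card (Quotient (MulAction.orbitRel (ConjAct G) (commTuples G n)))

open MulAction

lemma fixedBy_card (G : Type*) [Group G] [Fintype G] (n : ℕ) (g : ConjAct G) :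
    Nat.card (fixedBy (Fin n → G) g) =
      (Nat.card (Subgroup.centralizer {ConjAct.ofConjAct g}))^n := by
  have e : fixedBy (Fin n → G) g ≃ (Fin n → Subgroup.centralizer {ConjAct.ofConjAct g}) := by
    refine (Equiv.subtypeEquivRight ?_).trans
      (Equiv.subtypePiEquivPi (p := fun _ a => a ∈ Subgroup.centralizer {ConjAct.ofConjAct g}))
    intro x
    simp only [mem_fixedBy, funext_iff, Pi.smul_apply, ConjAct.smul_def,
      Subgroup.mem_centralizer_singleton_iff]
    constructor
    · intro h i; have := h i; rw [mul_inv_eq_iff_eq_mul] at this; exact this.symm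
    · intro h i; rw [mul_inv_eq_iff_eq_mul]; exact (h i).symm
  rw [Nat.card_congr e]
  simp [Nat.card_pi]

lemma alpha_eq (G : Type*) [Group G] [Fintype G] (n : ℕ) :
    alphaOrbits G n * Nat.card G =
      ∑ g : G, (Nat.card (Subgroup.centralizer {g}))^n := by
  classical
  haveI i1 : Fintype (Quotient (orbitRel (ConjAct G) (Fin n → G))) := Fintype.ofFinite _
  haveI i2 : ∀ a : ConjAct G, Fintype (fixedBy (Fin n → G) a) := fun a => Fintype.ofFinite _
  have burnside := MulAction.sum_card_fixedBy_eq_card_orbits_mul_card_group (ConjAct G) (Fin n → G)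
  have h1 : alphaOrbits G n = Fintype.card (Quotient (orbitRel (ConjAct G) (Fin n → G))) :=
    Nat.card_eq_fintype_card
  have h2 : Nat.card G = Fintype.card (ConjAct G) := by
    rw [Nat.card_eq_fintype_card]; rfl
  rw [h1, h2, ← burnside]
  refine (Fintype.sum_equiv (ConjAct.toConjAct (G := G)).toEquiv
    (fun g => (Nat.card (Subgroup.centralizer ({g} : Set G)))^n)
    (fun a => Fintype.card (fixedBy (Fin n → G) a)) fun g => ?_).symm
  have h := fixedBy_card G n (ConjAct.toConjAct g)
  simp only [ConjAct.ofConjAct_toConjAct] at h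
  simpa [Nat.card_eq_fintype_card] using h.symm

lemma centralizer_card_lt (G : Type*) [Group G] [Fintype G] (g : G)
    (hg : g ∉ Subgroup.center G) :
    Nat.card (Subgroup.centralizer ({g} : Set G)) < Nat.card G := by
  classical
  have hne : Subgroup.centralizer ({g} : Set G) ≠ ⊤ := by
    intro h
    apply hg
    rw [Subgroup.mem_center_iff]
    intro h'
    have : h' ∈ Subgroup.centralizer ({g} : Set G) := by rw [h]; trivial
    exact (Subgroup.mem_centralizer_singleton_iff.mp this)
  refine lt_of_le_of_ne (Subgroup.card_le_card_group _) fun h => hne ?_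
  exact Subgroup.eq_top_of_card_eq _ (by simpa using h)

/-- `α_{G,n} ∼ |Z(G)|·|G|^{n-1}` as `n → ∞`. -/
theorem alpha_asymptotic (G : Type*) [Group G] [Fintype G] :
    Filter.Tendsto
      (fun n : ℕ =>
        (alphaOrbits G n : ℝ) /
          ((Nat.card (Subgroup.center G) : ℝ) * (Nat.card G : ℝ) ^ (n - 1)))
      Filter.atTop (nhds 1) := by
  classical
  set q : ℝ := (Nat.card G : ℝ) with hq
  set z : ℝ := (Nat.card (Subgroup.center G) : ℝ) with hz
  have hq0 : 0 < q := by rw [hq]; exact_mod_cast Nat.card_pos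
  have hz0 : 0 < z := by rw [hz]; exact_mod_cast Nat.card_pos
  set F : Finset G := Finset.univ.filter (fun g : G => g ∉ Subgroup.center G) with hF
  set c : G → ℝ := fun g => (Nat.card (Subgroup.centralizer ({g} : Set G)) : ℝ) with hc
  set S : ℕ → ℝ := fun n => ∑ g ∈ F, (c g / q) ^ n with hS
  -- the full sum
  have hA : ∀ n : ℕ, (alphaOrbits G n : ℝ) * q = ∑ g : G, (c g) ^ n := by
    intro n
    have := alpha_eq G n
    have := congrArg (fun m : ℕ => (m : ℝ)) this
    push_cast at this
    simpa [hq, hc] using this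
  -- centralizer of central element is everything
  have hcen : ∀ g : G, g ∈ Subgroup.center G → c g = q := by
    intro g hg
    have : Subgroup.centralizer ({g} : Set G) = ⊤ := by
      rw [eq_top_iff]
      intro x _
      rw [Subgroup.mem_centralizer_singleton_iff]
      exact Subgroup.mem_center_iff.mp hg x
    show ((Nat.card (Subgroup.centralizer ({g} : Set G)) : ℝ)) = ((Nat.card G : ℝ))
    rw [this]
    exact_mod_cast congrArg Nat.cast (Subgroup.card_top)
  -- cardinality of the center as a filter card
  have hzcard : ((Finset.univ.filter (fun g : G => g ∈ Subgroup.center G)).card : ℝ) = z := by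
    rw [hz, Nat.card_eq_fintype_card, Fintype.card_subtype]
  -- split the sum
  have hsum : ∀ n : ℕ, (∑ g : G, (c g) ^ n) = z * q ^ n + ∑ g ∈ F, (c g) ^ n := by
    intro n
    rw [← Finset.sum_filter_add_sum_filter_not Finset.univ (fun g : G => g ∈ Subgroup.center G)]
    congr 1
    rw [Finset.sum_congr rfl (fun g hg => by
      rw [hcen g (Finset.mem_filter.mp hg).2]), Finset.sum_const, nsmul_eq_mul, hzcard]
  -- key identity for n ≥ 1
  have key : ∀ n : ℕ, 1 ≤ n → (alphaOrbits G n : ℝ) / (z * q ^ (n - 1)) = 1 + S n / z := by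
    intro n hn
    have hqn : q ^ n ≠ 0 := pow_ne_zero _ (ne_of_gt hq0)
    have hzne : z ≠ 0 := ne_of_gt hz0
    have hpow : q ^ (n - 1) * q = q ^ n := by
      rw [← pow_succ]; congr 1; omega
    have hSn : S n * q ^ n = ∑ g ∈ F, (c g) ^ n := by
      rw [hS]
      rw [Finset.sum_mul]
      refine Finset.sum_congr rfl fun g hg => ?_
      rw [div_pow, div_mul_cancel₀ _ hqn]
    have hAn : (alphaOrbits G n : ℝ) * q = z * q ^ n + S n * q ^ n := by
      rw [hA n, hsum n, hSn]
    have hq' : q ≠ 0 := ne_of_gt hq0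
    have hqn1 : q ^ (n - 1) ≠ 0 := pow_ne_zero _ hq'
    have hα : (alphaOrbits G n : ℝ) = (z + S n) * q ^ (n - 1) := by
      apply mul_right_cancel₀ hq'
      rw [hAn, ← hpow]; ring
    rw [hα, mul_comm (z + S n) (q ^ (n - 1)), mul_comm z (q ^ (n - 1)),
      mul_div_mul_left _ _ hqn1, add_div, div_self hzne]
  -- the error term tends to 0
  have hS0 : Filter.Tendsto S Filter.atTop (nhds 0) := by
    have h0 : (0 : ℝ) = ∑ g ∈ F, (0 : ℝ) := by simp
    rw [h0]
    refine tendsto_finset_sum _ fun g hg => ?_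
    refine tendsto_pow_atTop_nhds_zero_of_lt_one (by positivity) ?_
    rw [div_lt_one hq0, hc, hq]
    show ((Nat.card (Subgroup.centralizer ({g} : Set G)) : ℝ)) < ((Nat.card G : ℝ))
    exact_mod_cast centralizer_card_lt G g (Finset.mem_filter.mp hg).2
  have hlim : Filter.Tendsto (fun n => 1 + S n / z) Filter.atTop (nhds 1) := by
    have : Filter.Tendsto (fun n => 1 + S n / z) Filter.atTop (nhds (1 + 0 / z)) :=
      tendsto_const_nhds.add (hS0.div_const z)
    simpa using this
  refine hlim.congr' ?_
  filter_upwards [Filter.eventually_ge_atTop 1] with n hn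
  exact (key n hn).symm
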